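/- arXiv:2305.19473 — 2 statements merged into one kernel-verified Lean document; each statement's English description precedes it below -/
import Mathlib

section
/- Let X have density p on ℝ^d and Y = X + N with N ~ N(0, σ²I) independent of X. Then the Hessian of the log smoothed density satisfies ∇² log p_Y(y) = −(1/σ²)I + (1/σ⁴)·cov(X | Y = y). -/
set_option maxHeartbeats 1000000


open MeasureTheory Real

noncomputable section

def sqDist {d : ℕ} (x y : Fin d → ℝ) : ℝ := ∑ i, (x i - y i) ^ 2

/-- Density of the isotropic Gaussian `N(x, σ² I)` evaluated at `y`. -/
def gKer (d : ℕ) (σ : ℝ) (x y : Fin d → ℝ) : ℝ :=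
  (2 * π * σ ^ 2) ^ (-(d : ℝ) / 2) * Real.exp (-sqDist x y / (2 * σ ^ 2))

/-- Hessian matrix of `g` at `y`. -/
def hess' {d : ℕ} (g : (Fin d → ℝ) → ℝ) (y : Fin d → ℝ) : Matrix (Fin d) (Fin d) ℝ :=
  Matrix.of fun i j => fderiv ℝ (fun z => fderiv ℝ g z (Pi.single j 1)) y (Pi.single i 1)

/-- Posterior covariance of `X` given the noisy observation `y`. -/
def postCov (d : ℕ) (σ : ℝ) (p : (Fin d → ℝ) → ℝ) (y : Fin d → ℝ) :
    Matrix (Fin d) (Fin d) ℝ :=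
  Matrix.of fun i j =>
    (∫ x, x i * x j * (p x * gKer d σ x y)) / (∫ x, p x * gKer d σ x y)
      - ((∫ x, x i * (p x * gKer d σ x y)) / (∫ x, p x * gKer d σ x y))
          * ((∫ x, x j * (p x * gKer d σ x y)) / (∫ x, p x * gKer d σ x y))

namespace StmtAux

/-- The linear functional `v ↦ ∑ k, (x k - z k) * v k`. -/
def Dmap (d : ℕ) (x z : Fin d → ℝ) : (Fin d → ℝ) →L[ℝ] ℝ :=
  ∑ k, (x k - z k) • ContinuousLinearMap.proj (R := ℝ) (φ := fun _ : Fin d => ℝ) k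

lemma Dmap_apply {d : ℕ} (x z v : Fin d → ℝ) :
    Dmap d x z v = ∑ k, (x k - z k) * v k := by
  simp [Dmap]

lemma Dmap_single {d : ℕ} (x z : Fin d → ℝ) (j : Fin d) :
    Dmap d x z (Pi.single j 1) = x j - z j := by
  rw [Dmap_apply]
  simp [Pi.single_apply]

lemma Dmap_norm_le {d : ℕ} (x z : Fin d → ℝ) :
    ‖Dmap d x z‖ ≤ ∑ k, |x k - z k| := by
  refine (norm_sum_le _ _).trans ?_
  refine Finset.sum_le_sum fun k _ => ?_
  refine (norm_smul_le (x k - z k) (ContinuousLinearMap.proj (R := ℝ) (φ := fun _ : Fin d => ℝ) k)).trans ?_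
  rw [Real.norm_eq_abs]
  have h1 : ‖ContinuousLinearMap.proj (R := ℝ) (φ := fun _ : Fin d => ℝ) k‖ ≤ 1 := by
    refine ContinuousLinearMap.opNorm_le_bound _ zero_le_one fun w => ?_
    simpa using norm_le_pi_norm w k
  calc |x k - z k| * ‖ContinuousLinearMap.proj (R := ℝ) (φ := fun _ : Fin d => ℝ) k‖
      ≤ |x k - z k| * 1 := by gcongr
    _ = |x k - z k| := mul_one _

lemma continuous_Dmap {d : ℕ} (z : Fin d → ℝ) : Continuous fun x => Dmap d x z := by
  unfold Dmap
  exact continuous_finset_sum _ fun k _ =>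
    (((continuous_apply k).sub continuous_const).smul continuous_const)

lemma hasFDerivAt_gKer {d : ℕ} {σ : ℝ} (hσ : 0 < σ) (x z : Fin d → ℝ) :
    HasFDerivAt (fun w => gKer d σ x w) ((gKer d σ x z / σ ^ 2) • Dmap d x z) z := by
  have hσ2 : (σ : ℝ) ^ 2 ≠ 0 := by positivity
  have hs : ∀ k : Fin d, HasFDerivAt (fun w : Fin d → ℝ => -(x k - w k) ^ 2 / (2 * σ ^ 2))
      (((x k - z k) / σ ^ 2) • ContinuousLinearMap.proj (R := ℝ) (φ := fun _ : Fin d => ℝ) k)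
      z := by
    intro k
    have h1 : HasDerivAt (fun t : ℝ => -(x k - t) ^ 2 / (2 * σ ^ 2))
        ((x k - z k) / σ ^ 2) (z k) := by
      have h0 : HasDerivAt (fun t : ℝ => x k - t) (-1) (z k) :=
        (hasDerivAt_id (z k)).const_sub (x k)
      have h2 := ((h0.pow 2).neg).div_const (2 * σ ^ 2)
      refine h2.congr_deriv ?_
      field_simp
      ring
    have h3 := HasDerivAt.comp_hasFDerivAt (f := fun w : Fin d → ℝ => w k) z h1
      (ContinuousLinearMap.hasFDerivAt
        (ContinuousLinearMap.proj (R := ℝ) (φ := fun _ : Fin d => ℝ) k))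
    exact h3
  have hsum := HasFDerivAt.sum (u := Finset.univ)
    (fun k (_ : k ∈ Finset.univ) => hs k)
  have hexp := hsum.exp
  have hfin := hexp.const_mul ((2 * π * σ ^ 2) ^ (-(d : ℝ) / 2))
  have hfun : (fun w : Fin d → ℝ =>
      (2 * π * σ ^ 2) ^ (-(d : ℝ) / 2) *
        Real.exp (∑ k, -(x k - w k) ^ 2 / (2 * σ ^ 2))) = fun w => gKer d σ x w := by
    funext w
    unfold gKer sqDist
    congr 1
    congr 1
    rw [neg_div, Finset.sum_div, ← Finset.sum_neg_distrib]
    simp [neg_div]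
  simp only [Finset.sum_apply] at hfin
  rw [hfun] at hfin
  refine hfin.congr_fderiv (Eq.symm ?_)
  ext v
  unfold gKer sqDist
  simp only [ContinuousLinearMap.smul_apply, ContinuousLinearMap.coe_sum',
    Finset.sum_apply, ContinuousLinearMap.proj_apply, smul_eq_mul, Dmap_apply]
  rw [Finset.mul_sum, Finset.mul_sum, Finset.mul_sum]
  apply Finset.sum_congr rfl
  intro k _
  have : -(∑ i, (x i - z i) ^ 2) / (2 * σ ^ 2) = ∑ i, -(x i - z i) ^ 2 / (2 * σ ^ 2) := by
    rw [neg_div, Finset.sum_div, ← Finset.sum_neg_distrib]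
    simp [neg_div]
  rw [this]
  ring


lemma gKer_nonneg {d : ℕ} {σ : ℝ} (x y : Fin d → ℝ) : 0 ≤ gKer d σ x y := by
  unfold gKer
  positivity

lemma gKer_le_const {d : ℕ} {σ : ℝ} (hσ : 0 < σ) (x y : Fin d → ℝ) :
    gKer d σ x y ≤ (2 * π * σ ^ 2) ^ (-(d : ℝ) / 2) := by
  unfold gKer
  have h1 : Real.exp (-sqDist x y / (2 * σ ^ 2)) ≤ 1 := by
    rw [Real.exp_le_one_iff]
    apply div_nonpos_of_nonpos_of_nonneg
    · simp only [neg_nonpos]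
      unfold sqDist
      positivity
    · positivity
  calc (2 * π * σ ^ 2) ^ (-(d : ℝ) / 2) * Real.exp (-sqDist x y / (2 * σ ^ 2))
      ≤ (2 * π * σ ^ 2) ^ (-(d : ℝ) / 2) * 1 := by
        have : (0:ℝ) ≤ (2 * π * σ ^ 2) ^ (-(d : ℝ) / 2) := by positivity
        exact mul_le_mul_of_nonneg_left h1 this
    _ = _ := mul_one _

lemma continuous_gKer {d : ℕ} (σ : ℝ) (y : Fin d → ℝ) :
    Continuous fun x => gKer d σ x y := by
  unfold gKer sqDist
  fun_prop

/-- center of the shifted Gaussian indexed by a subset `t` -/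
def ctr {d : ℕ} (y : Fin d → ℝ) (t : Finset (Fin d)) : Fin d → ℝ :=
  fun k => if k ∈ t then y k + 1 else y k - 1

lemma gKer_ball_le {d : ℕ} {σ : ℝ} (hσ : 0 < σ) (y₀ x z : Fin d → ℝ)
    (hz : dist z y₀ < 1) :
    gKer d σ x z ≤ Real.exp (d / (2 * σ ^ 2)) *
      ∑ t ∈ Finset.univ.powerset, gKer d σ x (ctr y₀ t) := by
  have hσ2 : (0:ℝ) < 2 * σ ^ 2 := by positivity
  set A : Fin d → ℝ := fun k => Real.exp (-(x k - (y₀ k + 1)) ^ 2 / (2 * σ ^ 2)) with hA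
  set B : Fin d → ℝ := fun k => Real.exp (-(x k - (y₀ k - 1)) ^ 2 / (2 * σ ^ 2)) with hB
  have expand : ∀ w : Fin d → ℝ,
      Real.exp (-sqDist x w / (2 * σ ^ 2)) = ∏ k, Real.exp (-(x k - w k) ^ 2 / (2 * σ ^ 2)) := by
    intro w
    rw [← Real.exp_sum]
    congr 1
    unfold sqDist
    rw [neg_div, Finset.sum_div, ← Finset.sum_neg_distrib]
    simp [neg_div]
  -- per-coordinate bound
  have hApos : ∀ k, 0 ≤ A k := fun k => (Real.exp_pos _).le
  have hBpos : ∀ k, 0 ≤ B k := fun k => (Real.exp_pos _).le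
  have percoord : ∀ k, Real.exp (-(x k - z k) ^ 2 / (2 * σ ^ 2)) ≤
      Real.exp (1 / (2 * σ ^ 2)) * (A k + B k) := by
    intro k
    have hb : |z k - y₀ k| ≤ 1 := by
      have := dist_le_pi_dist z y₀ k
      rw [Real.dist_eq] at this
      linarith
    set a := x k - y₀ k with ha
    set b := z k - y₀ k with hbb
    have habs := abs_le.mp hb
    have hx1 : x k - z k = a - b := by ring
    have hA1 : A k = Real.exp (-(a - 1) ^ 2 / (2 * σ ^ 2)) := by
      simp only [hA]; congr 1; ring
    have hB1 : B k = Real.exp (-(a + 1) ^ 2 / (2 * σ ^ 2)) := by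
      simp only [hB]; congr 1; ring
    have key : ∀ u : ℝ, u ≤ (a - b) ^ 2 + 1 →
        Real.exp (-(a - b) ^ 2 / (2 * σ ^ 2)) ≤
          Real.exp (1 / (2 * σ ^ 2)) * Real.exp (-u / (2 * σ ^ 2)) := by
      intro u hu
      rw [← Real.exp_add, ← add_div]
      apply Real.exp_le_exp.mpr
      apply (div_le_div_iff_of_pos_right hσ2).mpr
      linarith
    rw [hx1, hA1, hB1]
    obtain ⟨hb1, hb2⟩ := habs
    rcases le_total 0 a with ha0 | ha0
    · have h1 : (a - 1) ^ 2 ≤ (a - b) ^ 2 + 1 := by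
        nlinarith [sq_nonneg b, mul_nonneg ha0 (by linarith : (0:ℝ) ≤ 1 - b)]
      calc Real.exp (-(a - b) ^ 2 / (2 * σ ^ 2))
          ≤ Real.exp (1 / (2 * σ ^ 2)) * Real.exp (-(a - 1) ^ 2 / (2 * σ ^ 2)) := key _ h1
        _ ≤ Real.exp (1 / (2 * σ ^ 2)) *
            (Real.exp (-(a - 1) ^ 2 / (2 * σ ^ 2)) + Real.exp (-(a + 1) ^ 2 / (2 * σ ^ 2))) := by
            have e1 := (Real.exp_pos (-(a + 1) ^ 2 / (2 * σ ^ 2))).le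
            have e2 := (Real.exp_pos (1 / (2 * σ ^ 2))).le
            nlinarith
    · have h1 : (a + 1) ^ 2 ≤ (a - b) ^ 2 + 1 := by
        nlinarith [sq_nonneg b, mul_nonneg (by linarith : (0:ℝ) ≤ -a) (by linarith : (0:ℝ) ≤ 1 + b)]
      calc Real.exp (-(a - b) ^ 2 / (2 * σ ^ 2))
          ≤ Real.exp (1 / (2 * σ ^ 2)) * Real.exp (-(a + 1) ^ 2 / (2 * σ ^ 2)) := key _ h1
        _ ≤ Real.exp (1 / (2 * σ ^ 2)) *
            (Real.exp (-(a - 1) ^ 2 / (2 * σ ^ 2)) + Real.exp (-(a + 1) ^ 2 / (2 * σ ^ 2))) := by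
            have e1 := (Real.exp_pos (-(a - 1) ^ 2 / (2 * σ ^ 2))).le
            have e2 := (Real.exp_pos (1 / (2 * σ ^ 2))).le
            nlinarith
  -- product over coordinates
  have hprod : Real.exp (-sqDist x z / (2 * σ ^ 2)) ≤
      Real.exp ((d : ℝ) / (2 * σ ^ 2)) * ∏ k, (A k + B k) := by
    rw [expand z]
    calc (∏ k, Real.exp (-(x k - z k) ^ 2 / (2 * σ ^ 2)))
        ≤ ∏ k, (Real.exp (1 / (2 * σ ^ 2)) * (A k + B k)) := by
          apply Finset.prod_le_prod
          · intro k _; positivity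
          · intro k _; exact percoord k
      _ = Real.exp ((d : ℝ) / (2 * σ ^ 2)) * ∏ k, (A k + B k) := by
          rw [Finset.prod_mul_distrib, Finset.prod_const, Finset.card_univ, Fintype.card_fin]
          congr 1
          rw [← Real.exp_nat_mul]
          congr 1
          field_simp
  -- expand product of sums into sum over subsets
  have hsubset : ∀ t : Finset (Fin d),
      (∏ k ∈ t, A k) * ∏ k ∈ Finset.univ \ t, B k =
        Real.exp (-sqDist x (ctr y₀ t) / (2 * σ ^ 2)) := by
    intro t
    rw [expand (ctr y₀ t)]
    have : ∀ k : Fin d, Real.exp (-(x k - ctr y₀ t k) ^ 2 / (2 * σ ^ 2)) =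
        if k ∈ t then A k else B k := by
      intro k
      unfold ctr
      by_cases h : k ∈ t <;> simp [h, hA, hB]
    rw [Finset.prod_congr rfl fun k _ => this k, Finset.prod_ite]
    congr 1
    · congr 1
      simp
    · congr 1
      rw [Finset.sdiff_eq_filter]
  have hps : (∏ k, (A k + B k)) =
      ∑ t ∈ Finset.univ.powerset, Real.exp (-sqDist x (ctr y₀ t) / (2 * σ ^ 2)) := by
    rw [Finset.prod_add]
    exact Finset.sum_congr rfl fun t _ => hsubset t
  -- conclude
  set C := (2 * π * σ ^ 2) ^ (-(d : ℝ) / 2) with hCdef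
  have hC : (0:ℝ) ≤ C := by rw [hCdef]; positivity
  unfold gKer
  rw [← hCdef]
  calc C * Real.exp (-sqDist x z / (2 * σ ^ 2))
      ≤ C * (Real.exp ((d : ℝ) / (2 * σ ^ 2)) * ∏ k, (A k + B k)) :=
        mul_le_mul_of_nonneg_left hprod hC
    _ = Real.exp ((d : ℝ) / (2 * σ ^ 2)) *
        (C * ∑ t ∈ Finset.univ.powerset, Real.exp (-sqDist x (ctr y₀ t) / (2 * σ ^ 2))) := by
        rw [hps]; ring
    _ = Real.exp ((d : ℝ) / (2 * σ ^ 2)) *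
        ∑ t ∈ Finset.univ.powerset, C * Real.exp (-sqDist x (ctr y₀ t) / (2 * σ ^ 2)) := by
        rw [Finset.mul_sum]

section Int

variable {d : ℕ} {σ : ℝ} {p : (Fin d → ℝ) → ℝ}

lemma int_base (hσ : 0 < σ) (hpm : AEStronglyMeasurable p volume) (hp0 : ∀ x, 0 ≤ p x)
    (hpi : Integrable p) (y' : Fin d → ℝ) :
    Integrable fun x => p x * gKer d σ x y' := by
  refine Integrable.mono' (hpi.const_mul ((2 * π * σ ^ 2) ^ (-(d : ℝ) / 2)))
    (hpm.mul (continuous_gKer σ y').aestronglyMeasurable) (ae_of_all _ fun x => ?_)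
  rw [Real.norm_eq_abs, abs_mul, abs_of_nonneg (hp0 x), abs_of_nonneg (gKer_nonneg x y')]
  calc p x * gKer d σ x y' ≤ p x * ((2 * π * σ ^ 2) ^ (-(d : ℝ) / 2)) :=
        mul_le_mul_of_nonneg_left (gKer_le_const hσ x y') (hp0 x)
    _ = _ := mul_comm _ _

variable (hσ : 0 < σ) (hpm : AEStronglyMeasurable p volume) (hp0 : ∀ x, 0 ≤ p x)
  (hpi : Integrable p)
  (hmom2 : ∀ (y : Fin d → ℝ) i j, Integrable fun x => x i * x j * (p x * gKer d σ x y))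

include hσ hpm hp0 hpi hmom2 in
lemma int_mom1 (y' : Fin d → ℝ) (i : Fin d) :
    Integrable fun x => |x i| * (p x * gKer d σ x y') := by
  refine Integrable.mono' (((int_base hσ hpm hp0 hpi y').add (hmom2 y' i i)).const_mul (1/2))
    (((continuous_apply i).abs.aestronglyMeasurable).mul
      (hpm.mul (continuous_gKer σ y').aestronglyMeasurable)) (ae_of_all _ fun x => ?_)
  have hpg : 0 ≤ p x * gKer d σ x y' := mul_nonneg (hp0 x) (gKer_nonneg x y')
  rw [Real.norm_eq_abs, abs_mul, abs_abs, abs_of_nonneg hpg]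
  have h : |x i| ≤ (1 + x i * x i) / 2 := by nlinarith [sq_nonneg (|x i| - 1), sq_abs (x i)]
  calc |x i| * (p x * gKer d σ x y') ≤ ((1 + x i * x i) / 2) * (p x * gKer d σ x y') :=
        mul_le_mul_of_nonneg_right h hpg
    _ = 1 / 2 * (p x * gKer d σ x y' + x i * x i * (p x * gKer d σ x y')) := by ring

include hσ hpm hp0 hpi hmom2 in
lemma int_mom2' (y' : Fin d → ℝ) (i j : Fin d) :
    Integrable fun x => |x i| * |x j| * (p x * gKer d σ x y') := by
  refine Integrable.mono' (((hmom2 y' i i).add (hmom2 y' j j)).const_mul (1/2))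
    ((((continuous_apply i).abs.mul (continuous_apply j).abs).aestronglyMeasurable).mul
      (hpm.mul (continuous_gKer σ y').aestronglyMeasurable)) (ae_of_all _ fun x => ?_)
  have hpg : 0 ≤ p x * gKer d σ x y' := mul_nonneg (hp0 x) (gKer_nonneg x y')
  rw [Real.norm_eq_abs, abs_mul, abs_mul, abs_abs, abs_abs, abs_of_nonneg hpg]
  have h : |x i| * |x j| ≤ (x i * x i + x j * x j) / 2 := by
    nlinarith [sq_nonneg (|x i| - |x j|), sq_abs (x i), sq_abs (x j)]
  calc |x i| * |x j| * (p x * gKer d σ x y')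
      ≤ ((x i * x i + x j * x j) / 2) * (p x * gKer d σ x y') :=
        mul_le_mul_of_nonneg_right h hpg
    _ = 1 / 2 * (x i * x i * (p x * gKer d σ x y') + x j * x j * (p x * gKer d σ x y')) := by
        ring

include hσ hpm hp0 hpi hmom2 in
lemma int_xj (y' : Fin d → ℝ) (j : Fin d) :
    Integrable fun x => x j * (p x * gKer d σ x y') := by
  refine Integrable.mono' (int_mom1 hσ hpm hp0 hpi hmom2 y' j)
    (((continuous_apply j).aestronglyMeasurable).mul
      (hpm.mul (continuous_gKer σ y').aestronglyMeasurable)) (ae_of_all _ fun x => ?_)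
  have hpg : 0 ≤ p x * gKer d σ x y' := mul_nonneg (hp0 x) (gKer_nonneg x y')
  rw [Real.norm_eq_abs, abs_mul, abs_of_nonneg hpg]

include hσ hpm hp0 hpi hmom2 in
lemma int_one_sum (y' : Fin d → ℝ) :
    Integrable fun x => (1 + ∑ k, |x k|) * (p x * gKer d σ x y') := by
  have heq : (fun x => (1 + ∑ k, |x k|) * (p x * gKer d σ x y'))
      = fun x => p x * gKer d σ x y' + ∑ k, |x k| * (p x * gKer d σ x y') := by
    funext x
    rw [add_mul, one_mul, Finset.sum_mul]
  rw [heq]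
  exact (int_base hσ hpm hp0 hpi y').add
    (integrable_finset_sum _ fun k _ => int_mom1 hσ hpm hp0 hpi hmom2 y' k)

include hσ hpm hp0 hpi hmom2 in
lemma int_xj_sum (y' : Fin d → ℝ) (j : Fin d) :
    Integrable fun x => |x j| * ((1 + ∑ k, |x k|) * (p x * gKer d σ x y')) := by
  have heq : (fun x => |x j| * ((1 + ∑ k, |x k|) * (p x * gKer d σ x y')))
      = fun x => |x j| * (p x * gKer d σ x y')
          + ∑ k, |x j| * |x k| * (p x * gKer d σ x y') := by
    funext x
    rw [add_mul, one_mul, mul_add, Finset.sum_mul, Finset.mul_sum]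
    congr 1
    exact Finset.sum_congr rfl fun k _ => (mul_assoc _ _ _).symm
  rw [heq]
  exact (int_mom1 hσ hpm hp0 hpi hmom2 y' j).add
    (integrable_finset_sum _ fun k _ => int_mom2' hσ hpm hp0 hpi hmom2 y' j k)

include hσ hpm hp0 in
lemma hasFDerivAt_int {w : (Fin d → ℝ) → ℝ} (hw : Continuous w)
    (hint : ∀ y' : Fin d → ℝ,
      Integrable fun x => |w x| * ((1 + ∑ k, |x k|) * (p x * gKer d σ x y')))
    (y₀ : Fin d → ℝ) :
    HasFDerivAt (fun z => ∫ x, w x * (p x * gKer d σ x z))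
        (∫ x, (w x * (p x * gKer d σ x y₀) / σ ^ 2) • Dmap d x y₀) y₀ ∧
      Integrable fun x => (w x * (p x * gKer d σ x y₀) / σ ^ 2) • Dmap d x y₀ := by
  have hσ2 : (0:ℝ) < σ ^ 2 := by positivity
  set Cy : ℝ := 1 + ∑ k, (|y₀ k| + 1) with hCy
  set bound : (Fin d → ℝ) → ℝ := fun x =>
    Real.exp (d / (2 * σ ^ 2)) * Cy / σ ^ 2 *
      ∑ t ∈ Finset.univ.powerset, |w x| * ((1 + ∑ k, |x k|) * (p x * gKer d σ x (ctr y₀ t)))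
    with hbound
  have hbound_int : Integrable bound :=
    (integrable_finset_sum _ fun t _ => hint (ctr y₀ t)).const_mul _
  have key : ∀ z : Fin d → ℝ, dist z y₀ < 1 → ∀ x,
      ‖(w x * (p x * gKer d σ x z) / σ ^ 2) • Dmap d x z‖ ≤ bound x := by
    intro z hz x
    have hpg : 0 ≤ p x * gKer d σ x z := mul_nonneg (hp0 x) (gKer_nonneg x z)
    have h1 : ‖(w x * (p x * gKer d σ x z) / σ ^ 2) • Dmap d x z‖
        ≤ |w x| * (p x * gKer d σ x z) / σ ^ 2 * ∑ k, |x k - z k| := by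
      refine (norm_smul_le (w x * (p x * gKer d σ x z) / σ ^ 2) (Dmap d x z)).trans ?_
      rw [Real.norm_eq_abs, abs_div, abs_mul, abs_of_nonneg hpg, abs_of_nonneg (sq_nonneg σ)]
      refine mul_le_mul_of_nonneg_left (Dmap_norm_le x z) ?_
      exact div_nonneg (mul_nonneg (abs_nonneg _) hpg) (sq_nonneg σ)
    have h2 : ∑ k, |x k - z k| ≤ Cy * (1 + ∑ k, |x k|) := by
      have hco : ∀ k, |x k - z k| ≤ |x k| + (|y₀ k| + 1) := by
        intro k
        have hzk : |z k - y₀ k| ≤ 1 := by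
          have := dist_le_pi_dist z y₀ k
          rw [Real.dist_eq] at this
          linarith
        have t1 : |x k - z k| ≤ |x k - y₀ k| + |z k - y₀ k| := by
          have := abs_sub (x k - y₀ k) (z k - y₀ k)
          calc |x k - z k| = |x k - y₀ k - (z k - y₀ k)| := by ring_nf
            _ ≤ |x k - y₀ k| + |z k - y₀ k| := abs_sub _ _
        have t2 : |x k - y₀ k| ≤ |x k| + |y₀ k| := abs_sub _ _
        linarith
      have hsum := Finset.sum_le_sum fun k (_ : k ∈ Finset.univ) => hco k
      rw [Finset.sum_add_distrib] at hsum
      have hS : (0:ℝ) ≤ ∑ k, |x k| := Finset.sum_nonneg fun k _ => abs_nonneg _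
      have hB : (0:ℝ) ≤ ∑ k, (|y₀ k| + 1) := Finset.sum_nonneg fun k _ => by positivity
      rw [hCy]
      nlinarith [mul_nonneg hB hS]
    have h3 := gKer_ball_le hσ y₀ x z hz
    calc ‖(w x * (p x * gKer d σ x z) / σ ^ 2) • Dmap d x z‖
        ≤ |w x| * (p x * gKer d σ x z) / σ ^ 2 * ∑ k, |x k - z k| := h1
      _ ≤ |w x| * (p x * (Real.exp (d / (2 * σ ^ 2)) *
            ∑ t ∈ Finset.univ.powerset, gKer d σ x (ctr y₀ t))) / σ ^ 2 *
            (Cy * (1 + ∑ k, |x k|)) := by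
          have hle1 : p x * gKer d σ x z ≤ p x * (Real.exp (d / (2 * σ ^ 2)) *
              ∑ t ∈ Finset.univ.powerset, gKer d σ x (ctr y₀ t)) :=
            mul_le_mul_of_nonneg_left h3 (hp0 x)
          have hle2 : |w x| * (p x * gKer d σ x z) / σ ^ 2
              ≤ |w x| * (p x * (Real.exp (d / (2 * σ ^ 2)) *
                  ∑ t ∈ Finset.univ.powerset, gKer d σ x (ctr y₀ t))) / σ ^ 2 := by
            exact (div_le_div_iff_of_pos_right hσ2).mpr
              (mul_le_mul_of_nonneg_left hle1 (abs_nonneg _))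
          refine mul_le_mul hle2 h2 (Finset.sum_nonneg fun k _ => abs_nonneg _) ?_
          refine div_nonneg (mul_nonneg (abs_nonneg _) ?_) (sq_nonneg σ)
          refine mul_nonneg (hp0 x) (mul_nonneg (Real.exp_pos _).le ?_)
          exact Finset.sum_nonneg fun t _ => gKer_nonneg _ _
      _ = bound x := by
          rw [hbound]
          simp only [Finset.mul_sum, div_eq_mul_inv, Finset.sum_mul]
          exact Finset.sum_congr rfl fun t _ => by ring
  have hdiff : ∀ x : Fin d → ℝ, ∀ z : Fin d → ℝ,
      HasFDerivAt (fun z' => w x * (p x * gKer d σ x z'))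
        ((w x * (p x * gKer d σ x z) / σ ^ 2) • Dmap d x z) z := by
    intro x z
    have h := (hasFDerivAt_gKer hσ x z).const_mul (w x * p x)
    have heq : (fun z' => w x * (p x * gKer d σ x z'))
        = fun z' => (w x * p x) * gKer d σ x z' := funext fun z' => by ring
    rw [heq]
    refine h.congr_fderiv ?_
    rw [smul_smul]
    congr 1
    ring
  have hmeas : ∀ z : Fin d → ℝ,
      AEStronglyMeasurable (fun x => w x * (p x * gKer d σ x z)) volume := fun z =>
    hw.aestronglyMeasurable.mul (hpm.mul (continuous_gKer σ z).aestronglyMeasurable)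
  have hFint : Integrable fun x => w x * (p x * gKer d σ x y₀) := by
    refine Integrable.mono' (hint y₀) (hmeas y₀) (ae_of_all _ fun x => ?_)
    have hpg : 0 ≤ p x * gKer d σ x y₀ := mul_nonneg (hp0 x) (gKer_nonneg x y₀)
    rw [Real.norm_eq_abs, abs_mul, abs_of_nonneg hpg]
    refine mul_le_mul_of_nonneg_left ?_ (abs_nonneg _)
    refine le_mul_of_one_le_left hpg ?_
    have : (0:ℝ) ≤ ∑ k, |x k| := Finset.sum_nonneg fun k _ => abs_nonneg _
    linarith
  have hF'meas : AEStronglyMeasurable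
      (fun x => (w x * (p x * gKer d σ x y₀) / σ ^ 2) • Dmap d x y₀) volume := by
    refine AEStronglyMeasurable.fun_smul ?_ (continuous_Dmap y₀).aestronglyMeasurable
    have heq : (fun x => w x * (p x * gKer d σ x y₀) / σ ^ 2)
        = fun x => w x * (p x * gKer d σ x y₀) * (σ ^ 2)⁻¹ :=
      funext fun x => div_eq_mul_inv _ _
    rw [heq]
    exact ((hw.aestronglyMeasurable.mul
      (hpm.mul (continuous_gKer σ y₀).aestronglyMeasurable)).mul aestronglyMeasurable_const)
  have main := hasFDerivAt_integral_of_dominated_of_fderiv_le (𝕜 := ℝ) (μ := volume)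
    (F := fun z x => w x * (p x * gKer d σ x z))
    (F' := fun z x => (w x * (p x * gKer d σ x z) / σ ^ 2) • Dmap d x z)
    (x₀ := y₀) (bound := bound) (s := Metric.ball y₀ 1) (Metric.ball_mem_nhds y₀ one_pos)
    (Filter.Eventually.of_forall fun z => hmeas z) hFint hF'meas
    (ae_of_all _ fun x z hzb => key z (Metric.mem_ball.mp hzb) x) hbound_int
    (ae_of_all _ fun x z _ => hdiff x z)
  refine ⟨main, ?_⟩
  refine Integrable.mono' hbound_int hF'meas (ae_of_all _ fun x => ?_)
  exact key y₀ (by simp) x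

end Int

end StmtAux

open StmtAux in
/-- If `X` has density `p` and `Y = X + N`, `N ~ N(0, σ²I)`, then
`∇² log p_Y(y) = −(1/σ²) I + (1/σ⁴) cov(X | Y = y)` for every `y`. -/
theorem stmt3 (d : ℕ) (σ : ℝ) (hσ : 0 < σ) (p : (Fin d → ℝ) → ℝ)
    (hp0 : ∀ x, 0 ≤ p x) (hpi : Integrable p) (hp1 : ∫ x, p x = 1)
    (hpos : ∀ y, 0 < ∫ x, p x * gKer d σ x y)
    (hmom2 : ∀ y i j, Integrable fun x => x i * x j * (p x * gKer d σ x y)) :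
    ∀ y : Fin d → ℝ,
      hess' (fun z => Real.log (∫ x, p x * gKer d σ x z)) y
        = -((1 / σ ^ 2) • (1 : Matrix (Fin d) (Fin d) ℝ))
            + (1 / σ ^ 4) • postCov d σ p y := by
  intro y
  have hpm : AEStronglyMeasurable p volume := hpi.aestronglyMeasurable
  have hσ2 : (σ : ℝ) ^ 2 ≠ 0 := by positivity
  -- derivative of F z = ∫ p * gKer
  have H1 : ∀ z : Fin d → ℝ,
      HasFDerivAt (fun z' => ∫ x, p x * gKer d σ x z')
          (∫ x, (p x * gKer d σ x z / σ ^ 2) • Dmap d x z) z ∧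
        Integrable fun x => (p x * gKer d σ x z / σ ^ 2) • Dmap d x z := by
    intro z
    have hint1 : ∀ y' : Fin d → ℝ, Integrable fun x =>
        |(fun _ : Fin d → ℝ => (1:ℝ)) x| * ((1 + ∑ k, |x k|) * (p x * gKer d σ x y')) := by
      intro y'
      simpa using int_one_sum hσ hpm hp0 hpi hmom2 y'
    simpa using hasFDerivAt_int hσ hpm hp0 (w := fun _ : Fin d → ℝ => (1:ℝ))
      continuous_const hint1 z
  -- derivative of M_l z = ∫ x_l * (p * gKer)
  have H2 : ∀ (l : Fin d) (z : Fin d → ℝ),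
      HasFDerivAt (fun z' => ∫ x, x l * (p x * gKer d σ x z'))
          (∫ x, (x l * (p x * gKer d σ x z) / σ ^ 2) • Dmap d x z) z ∧
        Integrable fun x => (x l * (p x * gKer d σ x z) / σ ^ 2) • Dmap d x z := by
    intro l z
    have hintl : ∀ y' : Fin d → ℝ, Integrable fun x =>
        |(fun x : Fin d → ℝ => x l) x| * ((1 + ∑ k, |x k|) * (p x * gKer d σ x y')) := by
      intro y'
      simpa using int_xj_sum hσ hpm hp0 hpi hmom2 y' l
    simpa using hasFDerivAt_int hσ hpm hp0 (w := fun x : Fin d → ℝ => x l)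
      (continuous_apply l) hintl z
  -- applying Phi to basis vectors
  have apply_Phi : ∀ (z : Fin d → ℝ) (l : Fin d),
      (∫ x, (p x * gKer d σ x z / σ ^ 2) • Dmap d x z) (Pi.single l 1)
        = (σ ^ 2)⁻¹ * ((∫ x, x l * (p x * gKer d σ x z))
            - z l * ∫ x, p x * gKer d σ x z) := by
    intro z l
    rw [ContinuousLinearMap.integral_apply (H1 z).2 (Pi.single l 1)]
    have heq : (fun x => ((p x * gKer d σ x z / σ ^ 2) • Dmap d x z) (Pi.single l 1))
        = fun x => (σ ^ 2)⁻¹ * (x l * (p x * gKer d σ x z) - z l * (p x * gKer d σ x z)) := by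
      funext x
      rw [ContinuousLinearMap.smul_apply, Dmap_single, smul_eq_mul]
      ring
    rw [heq, integral_const_mul]
    congr 1
    rw [integral_sub (int_xj hσ hpm hp0 hpi hmom2 z l)
      ((int_base hσ hpm hp0 hpi z).const_mul (z l))]
    congr 1
    exact integral_const_mul _ _
  have apply_Psi : ∀ (l m : Fin d),
      (∫ x, (x m * (p x * gKer d σ x y) / σ ^ 2) • Dmap d x y) (Pi.single l 1)
        = (σ ^ 2)⁻¹ * ((∫ x, x l * x m * (p x * gKer d σ x y))
            - y l * ∫ x, x m * (p x * gKer d σ x y)) := by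
    intro l m
    rw [ContinuousLinearMap.integral_apply (H2 m y).2 (Pi.single l 1)]
    have heq : (fun x => ((x m * (p x * gKer d σ x y) / σ ^ 2) • Dmap d x y) (Pi.single l 1))
        = fun x => (σ ^ 2)⁻¹ * (x l * x m * (p x * gKer d σ x y)
            - y l * (x m * (p x * gKer d σ x y))) := by
      funext x
      rw [ContinuousLinearMap.smul_apply, Dmap_single, smul_eq_mul]
      ring
    rw [heq, integral_const_mul]
    congr 1
    rw [integral_sub (hmom2 y l m)
      ((int_xj hσ hpm hp0 hpi hmom2 y m).const_mul (y l))]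
    congr 1
    exact integral_const_mul _ _
  ext i j
  simp only [hess', Matrix.of_apply]
  have main_eq : (fun z => fderiv ℝ (fun z' => Real.log (∫ x, p x * gKer d σ x z')) z
        (Pi.single j 1))
      = fun z => (σ ^ 2)⁻¹ * ((∫ x, x j * (p x * gKer d σ x z))
          * (∫ x, p x * gKer d σ x z)⁻¹ - z j) := by
    funext z
    have hlog := (H1 z).1.log (ne_of_gt (hpos z))
    rw [hlog.fderiv]
    rw [ContinuousLinearMap.smul_apply, smul_eq_mul, apply_Phi z j]
    have hne := ne_of_gt (hpos z)
    field_simp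
  rw [main_eq]
  -- second differentiation
  have hinv : HasFDerivAt (fun z => (∫ x, p x * gKer d σ x z)⁻¹)
      (-((∫ x, p x * gKer d σ x y) ^ 2)⁻¹ •
        (∫ x, (p x * gKer d σ x y / σ ^ 2) • Dmap d x y)) y :=
    (hasDerivAt_inv (ne_of_gt (hpos y))).comp_hasFDerivAt y (H1 y).1
  have hq : HasFDerivAt
      (fun z => (∫ x, x j * (p x * gKer d σ x z)) * (∫ x, p x * gKer d σ x z)⁻¹)
      ((∫ x, x j * (p x * gKer d σ x y)) •
          (-((∫ x, p x * gKer d σ x y) ^ 2)⁻¹ •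
            (∫ x, (p x * gKer d σ x y / σ ^ 2) • Dmap d x y))
        + (∫ x, p x * gKer d σ x y)⁻¹ •
            (∫ x, (x j * (p x * gKer d σ x y) / σ ^ 2) • Dmap d x y)) y :=
    (H2 j y).1.mul hinv
  have hproj : HasFDerivAt (fun z : Fin d → ℝ => z j)
      (ContinuousLinearMap.proj (R := ℝ) (φ := fun _ : Fin d => ℝ) j) y :=
    ContinuousLinearMap.hasFDerivAt
      (ContinuousLinearMap.proj (R := ℝ) (φ := fun _ : Fin d => ℝ) j)
  have hfinal : HasFDerivAt
      (fun z => (σ ^ 2)⁻¹ * ((∫ x, x j * (p x * gKer d σ x z))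
          * (∫ x, p x * gKer d σ x z)⁻¹ - z j))
      ((σ ^ 2)⁻¹ • (((∫ x, x j * (p x * gKer d σ x y)) •
          (-((∫ x, p x * gKer d σ x y) ^ 2)⁻¹ •
            (∫ x, (p x * gKer d σ x y / σ ^ 2) • Dmap d x y))
        + (∫ x, p x * gKer d σ x y)⁻¹ •
            (∫ x, (x j * (p x * gKer d σ x y) / σ ^ 2) • Dmap d x y))
        - ContinuousLinearMap.proj (R := ℝ) (φ := fun _ : Fin d => ℝ) j)) y :=
    (hq.sub hproj).const_mul _
  rw [hfinal.fderiv]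
  simp only [ContinuousLinearMap.smul_apply, ContinuousLinearMap.add_apply,
    ContinuousLinearMap.sub_apply, smul_eq_mul, ContinuousLinearMap.proj_apply]
  rw [apply_Phi y i, apply_Psi i j]
  have hne := ne_of_gt (hpos y)
  simp only [Matrix.add_apply, Matrix.neg_apply, Matrix.smul_apply, Matrix.one_apply,
    postCov, Matrix.of_apply, smul_eq_mul, Pi.single_apply]
  by_cases hij : i = j
  · subst hij
    simp only [if_pos rfl]
    field_simp
    ring
  · simp only [if_neg hij, if_neg (Ne.symm hij)]
    field_simp
    ring


end
end

section
/- Let X have density p ∝ e^{−f} on ℝ^d with f C², and Y = X + N, N ~ N(0, σ²I) independent of X. Then ∇² log p_Y(y) = −𝔼[∇²f(X) | Y=y] + cov(∇f(X) | Y=y). -/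
open MeasureTheory Real

noncomputable section

def grad' {d : ℕ} (g : (Fin d → ℝ) → ℝ) (y : Fin d → ℝ) (i : Fin d) : ℝ :=
  fderiv ℝ g y (Pi.single i 1)

/-- Posterior expectation of `φ : ℝ^d → ℝ` given `y`, under `p(x|y) ∝ e^{−f(x)} k_σ(x,y)`. -/
def postE (d : ℕ) (σ : ℝ) (f : (Fin d → ℝ) → ℝ) (φ : (Fin d → ℝ) → ℝ)
    (y : Fin d → ℝ) : ℝ :=
  (∫ x, φ x * (Real.exp (-f x) * gKer d σ x y)) / ∫ x, Real.exp (-f x) * gKer d σ x y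

section AuxLemmas

variable {d : ℕ} {σ : ℝ}

lemma sqDist_nonneg (x y : Fin d → ℝ) : 0 ≤ sqDist x y :=
  Finset.sum_nonneg fun _ _ => sq_nonneg _

lemma sqDist_comm (x y : Fin d → ℝ) : sqDist x y = sqDist y x :=
  Finset.sum_congr rfl fun i _ => by ring

lemma gKer_pos (hσ : 0 < σ) (x y : Fin d → ℝ) : 0 < gKer d σ x y := by
  unfold gKer
  have : (0:ℝ) < 2 * π * σ ^ 2 := by positivity
  positivity

lemma gKer_le (hσ : 0 < σ) (x y : Fin d → ℝ) :
    gKer d σ x y ≤ (2 * π * σ ^ 2) ^ (-(d : ℝ) / 2) := by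
  unfold gKer
  have h1 : Real.exp (-sqDist x y / (2 * σ ^ 2)) ≤ 1 := by
    rw [Real.exp_le_one_iff]
    have h2 : (0:ℝ) < 2 * σ ^ 2 := by positivity
    exact div_nonpos_of_nonpos_of_nonneg (by simpa using sqDist_nonneg x y) h2.le
  have hc : (0:ℝ) ≤ (2 * π * σ ^ 2) ^ (-(d : ℝ) / 2) := by
    have : (0:ℝ) < 2 * π * σ ^ 2 := by positivity
    positivity
  calc _ ≤ (2 * π * σ ^ 2) ^ (-(d : ℝ) / 2) * 1 := mul_le_mul_of_nonneg_left h1 hc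
    _ = _ := mul_one _

lemma gKer_comm (x y : Fin d → ℝ) : gKer d σ x y = gKer d σ y x := by
  unfold gKer; rw [sqDist_comm]

/-- The Gaussian shift identity. -/
lemma gKer_shift (hσ : 0 < σ) (a x y : Fin d → ℝ) :
    Real.exp (∑ i, a i * (x i - y i)) * gKer d σ x y
      = Real.exp (σ ^ 2 * (∑ i, (a i) ^ 2) / 2) * gKer d σ x (fun i => y i + σ ^ 2 * a i) := by
  have hmix : ∀ (A c B : ℝ), Real.exp A * (c * Real.exp B) = c * Real.exp (A + B) := by
    intro A c B; rw [Real.exp_add]; ring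
  unfold gKer sqDist
  rw [hmix, hmix]
  congr 2
  have hσ2 : (σ:ℝ) ^ 2 ≠ 0 := by positivity
  have key : ∀ i : Fin d, a i * (x i - y i) + (-(x i - y i) ^ 2) / (2 * σ ^ 2)
      = σ ^ 2 * (a i) ^ 2 / 2 + (-(x i - (y i + σ ^ 2 * a i)) ^ 2) / (2 * σ ^ 2) := by
    intro i; field_simp; ring
  calc ∑ i, a i * (x i - y i) + (-∑ i, (x i - y i) ^ 2) / (2 * σ ^ 2)
      = ∑ i, (a i * (x i - y i) + (-(x i - y i) ^ 2) / (2 * σ ^ 2)) := by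
        rw [Finset.sum_add_distrib, ← Finset.sum_div, ← Finset.sum_neg_distrib]
    _ = ∑ i, (σ ^ 2 * (a i) ^ 2 / 2 + (-(x i - (y i + σ ^ 2 * a i)) ^ 2) / (2 * σ ^ 2)) :=
        Finset.sum_congr rfl fun i _ => key i
    _ = (σ ^ 2 * ∑ i, (a i) ^ 2) / 2
          + (-∑ i, (x i - (fun i => y i + σ ^ 2 * a i) i) ^ 2) / (2 * σ ^ 2) := by
        rw [Finset.sum_add_distrib, ← Finset.sum_div, ← Finset.sum_neg_distrib,
          Finset.mul_sum, ← Finset.sum_div]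

/-- derivative of `y ↦ gKer d σ x y`. -/
def kdCLM (d : ℕ) (σ : ℝ) (x y : Fin d → ℝ) : (Fin d → ℝ) →L[ℝ] ℝ :=
  (gKer d σ x y / σ ^ 2) • (∑ i, (x i - y i) • (ContinuousLinearMap.proj i : (Fin d → ℝ) →L[ℝ] ℝ))

lemma kdCLM_apply_single (x y : Fin d → ℝ) (j : Fin d) :
    kdCLM d σ x y (Pi.single j 1) = (x j - y j) / σ ^ 2 * gKer d σ x y := by
  simp only [kdCLM, ContinuousLinearMap.smul_apply, ContinuousLinearMap.sum_apply,
    ContinuousLinearMap.proj_apply, smul_eq_mul]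
  rw [Finset.sum_eq_single j]
  · simp; ring
  · intro i _ hij; simp [Pi.single_apply, hij]
  · simp

lemma hasFDerivAt_gKer (hσ : 0 < σ) (x y : Fin d → ℝ) :
    HasFDerivAt (fun z => gKer d σ x z) (kdCLM d σ x y) y := by
  have hS : HasFDerivAt (fun z : Fin d → ℝ => sqDist x z)
      (∑ i, (-(2 * (x i - y i))) • (ContinuousLinearMap.proj i : (Fin d → ℝ) →L[ℝ] ℝ)) y := by
    apply HasFDerivAt.fun_sum
    intro i _
    have h1 : HasFDerivAt (fun z : Fin d → ℝ => x i - z i)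
        (-(ContinuousLinearMap.proj i : (Fin d → ℝ) →L[ℝ] ℝ)) y := by
      simpa using (hasFDerivAt_const (x i) y).fun_sub
        (ContinuousLinearMap.proj i : (Fin d → ℝ) →L[ℝ] ℝ).hasFDerivAt
    have h2 := h1.fun_mul h1
    have h3 : (fun z : Fin d → ℝ => (x i - z i) ^ 2)
        = fun z => (x i - z i) * (x i - z i) := funext fun z => sq (x i - z i)
    rw [h3]
    refine h2.congr_fderiv ?_
    ext v
    simp
    ring
  have hq := hS.const_mul (-(1 / (2 * σ ^ 2)))
  have hexp := hq.exp
  have hc := hexp.const_mul ((2 * π * σ ^ 2) ^ (-(d : ℝ) / 2))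
  have hfun : (fun z => gKer d σ x z)
      = fun z => (2 * π * σ ^ 2) ^ (-(d : ℝ) / 2)
          * Real.exp (-(1 / (2 * σ ^ 2)) * sqDist x z) := by
    funext z
    unfold gKer
    congr 1
    ring
  rw [hfun]
  refine hc.congr_fderiv ?_
  ext v
  have hσ2 : (σ:ℝ) ^ 2 ≠ 0 := by positivity
  simp [kdCLM, gKer, Finset.mul_sum, Finset.smul_sum, Finset.sum_div, ← Finset.sum_mul]
  apply Finset.sum_congr rfl
  intro i _
  field_simp

/-- shifted centers used for domination -/
def zc (d : ℕ) (σ : ℝ) (y₀ : Fin d → ℝ) (t : Finset (Fin d)) : Fin d → ℝ :=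
  fun i => y₀ i + σ ^ 2 * ((1 + 1 / σ ^ 2) * (if i ∈ t then 1 else -1))

/-- dominating function -/
def domB (d : ℕ) (σ : ℝ) (y₀ x : Fin d → ℝ) : ℝ :=
  Real.exp d * Real.exp (σ ^ 2 * ((d : ℝ) * (1 + 1 / σ ^ 2) ^ 2) / 2)
    * ∑ t : Finset (Fin d), gKer d σ x (zc d σ y₀ t)

lemma est (hσ : 0 < σ) (y₀ y x : Fin d → ℝ) (hy : ∀ i, |y i - y₀ i| ≤ 1) :
    (∑ i, |x i - y i|) * gKer d σ x y ≤ domB d σ y₀ x := by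
  set c₁ : ℝ := 1 + 1 / σ ^ 2 with hc₁
  have hσ2 : (0:ℝ) < σ ^ 2 := by positivity
  set u : Fin d → ℝ := fun i => x i - y₀ i with hu
  -- Step 1 : sum of abs ≤ exp d * exp (∑ |u i|)
  have step1 : (∑ i, |x i - y i|) ≤ Real.exp d * Real.exp (∑ i, |u i|) := by
    have h1 : (∑ i, |x i - y i|) ≤ (d : ℝ) + ∑ i, |u i| := by
      have hh : ∀ i, |x i - y i| ≤ |u i| + 1 := by
        intro i
        have he : x i - y i = u i - (y i - y₀ i) := by simp only [hu]; ring
        rw [he]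
        exact (abs_sub _ _).trans (by linarith [hy i])
      calc (∑ i, |x i - y i|) ≤ ∑ i, (|u i| + 1) := Finset.sum_le_sum fun i _ => hh i
        _ = (∑ i, |u i|) + d := by rw [Finset.sum_add_distrib]; simp [add_comm]
        _ = (d:ℝ) + ∑ i, |u i| := by ring
    have h2 := Real.add_one_le_exp ((d:ℝ) + ∑ i, |u i|)
    calc (∑ i, |x i - y i|) ≤ (d : ℝ) + ∑ i, |u i| := h1
      _ ≤ Real.exp ((d:ℝ) + ∑ i, |u i|) := by linarith
      _ = _ := Real.exp_add _ _
  -- Step 2 : gKer x y ≤ gKer x y₀ * exp ((1/σ²) ∑ |u i|)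
  have step2 : gKer d σ x y ≤ gKer d σ x y₀ * Real.exp ((1 / σ ^ 2) * ∑ i, |u i|) := by
    unfold gKer sqDist
    rw [mul_assoc ((2 * π * σ ^ 2) ^ (-(d:ℝ) / 2)), ← Real.exp_add]
    apply mul_le_mul_of_nonneg_left _ (by positivity)
    apply Real.exp_le_exp.2
    have key : ∑ i, (u i) ^ 2 - 2 * ∑ i, |u i| ≤ ∑ i, (x i - y i) ^ 2 := by
      have hterm : ∀ i : Fin d, (u i) ^ 2 - 2 * |u i| ≤ (x i - y i) ^ 2 := by
        intro i
        have ht := abs_le.1 (hy i)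
        have h1 := le_abs_self (u i)
        have h2 := neg_abs_le (u i)
        have he : x i - y i = u i - (y i - y₀ i) := by simp only [hu]; ring
        rw [he]
        nlinarith [abs_nonneg (u i), sq_nonneg (y i - y₀ i)]
      calc ∑ i, (u i) ^ 2 - 2 * ∑ i, |u i| = ∑ i, ((u i) ^ 2 - 2 * |u i|) := by
            rw [Finset.sum_sub_distrib, Finset.mul_sum]
        _ ≤ _ := Finset.sum_le_sum fun i _ => hterm i
    have h3 : (-∑ i, (x i - y i) ^ 2) / (2 * σ ^ 2)
        ≤ (-∑ i, (u i) ^ 2 + 2 * ∑ i, |u i|) / (2 * σ ^ 2) := by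
      gcongr
      linarith
    have h4 : (-∑ i, (u i) ^ 2 + 2 * ∑ i, |u i|) / (2 * σ ^ 2)
        = (-∑ i, (u i) ^ 2) / (2 * σ ^ 2) + 1 / σ ^ 2 * ∑ i, |u i| := by
      field_simp
    simp only [hu] at h3 h4 ⊢
    linarith
  -- Step 4 : gKer x y₀ * exp (c₁ ∑ |u i|) ≤ exp (σ²dc₁²/2) * ∑ t, gKer x (zc t)
  have step4 : gKer d σ x y₀ * Real.exp (c₁ * ∑ i, |u i|)
      ≤ Real.exp (σ ^ 2 * ((d : ℝ) * c₁ ^ 2) / 2) * ∑ t : Finset (Fin d), gKer d σ x (zc d σ y₀ t) := by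
    have hc₁pos : 0 < c₁ := by positivity
    have hexpand : Real.exp (c₁ * ∑ i, |u i|)
        ≤ ∑ t : Finset (Fin d), Real.exp (∑ i, (c₁ * (if i ∈ t then 1 else -1)) * u i) := by
      have h5 : Real.exp (c₁ * ∑ i, |u i|) = ∏ i, Real.exp (c₁ * |u i|) := by
        rw [← Real.exp_sum, Finset.mul_sum]
      have h6 : ∀ i : Fin d, Real.exp (c₁ * |u i|)
          ≤ Real.exp (c₁ * u i) + Real.exp (-(c₁ * u i)) := by
        intro i
        rcases abs_cases (u i) with ⟨h, _⟩ | ⟨h, _⟩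
        · rw [h]; nlinarith [Real.exp_pos (-(c₁ * u i))]
        · rw [h, mul_neg]; nlinarith [Real.exp_pos (c₁ * u i)]
      have h7 : (∏ i, (Real.exp (c₁ * u i) + Real.exp (-(c₁ * u i))))
          = ∑ t : Finset (Fin d), Real.exp (∑ i, (c₁ * (if i ∈ t then 1 else -1)) * u i) := by
        rw [Finset.prod_add]
        rw [Finset.powerset_univ]
        apply Finset.sum_congr rfl
        intro t _
        rw [← Real.exp_sum, ← Real.exp_sum, ← Real.exp_add]
        congr 1
        rw [show ∀ g : Fin d → ℝ, ∑ i, g i = ∑ i ∈ Finset.univ ∩ t, g i + ∑ i ∈ Finset.univ \ t, g i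
          from fun g => by rw [← Finset.sum_inter_add_sum_sdiff], Finset.univ_inter]
        congr 1
        · exact Finset.sum_congr rfl fun i hi => by simp [hi]
        · refine Finset.sum_congr rfl fun i hi => ?_
          have : i ∉ t := (Finset.mem_sdiff.1 hi).2
          simp [this]
      calc Real.exp (c₁ * ∑ i, |u i|) = ∏ i, Real.exp (c₁ * |u i|) := h5
        _ ≤ ∏ i, (Real.exp (c₁ * u i) + Real.exp (-(c₁ * u i))) :=
            Finset.prod_le_prod (fun i _ => (Real.exp_pos _).le) fun i _ => h6 i
        _ = _ := h7
    have hshift : ∀ t : Finset (Fin d),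
        Real.exp (∑ i, (c₁ * (if i ∈ t then 1 else -1)) * u i) * gKer d σ x y₀
          = Real.exp (σ ^ 2 * ((d : ℝ) * c₁ ^ 2) / 2) * gKer d σ x (zc d σ y₀ t) := by
      intro t
      have := gKer_shift hσ (fun i => c₁ * (if i ∈ t then 1 else -1)) x y₀
      simp only [hu] at this ⊢
      rw [this]
      congr 2
      · rw [show ∑ i : Fin d, (c₁ * (if i ∈ t then 1 else -1)) ^ 2 = ∑ _i : Fin d, c₁ ^ 2 from
          Finset.sum_congr rfl fun i _ => by split_ifs <;> ring]
        simp [mul_comm]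
    calc gKer d σ x y₀ * Real.exp (c₁ * ∑ i, |u i|)
        ≤ gKer d σ x y₀ * ∑ t : Finset (Fin d),
            Real.exp (∑ i, (c₁ * (if i ∈ t then 1 else -1)) * u i) :=
          mul_le_mul_of_nonneg_left hexpand (gKer_pos hσ x y₀).le
      _ = ∑ t : Finset (Fin d),
            Real.exp (∑ i, (c₁ * (if i ∈ t then 1 else -1)) * u i) * gKer d σ x y₀ := by
          rw [Finset.mul_sum]; exact Finset.sum_congr rfl fun t _ => mul_comm _ _
      _ = ∑ t : Finset (Fin d),
            Real.exp (σ ^ 2 * ((d : ℝ) * c₁ ^ 2) / 2) * gKer d σ x (zc d σ y₀ t) :=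
          Finset.sum_congr rfl fun t _ => hshift t
      _ = _ := by rw [← Finset.mul_sum]
  -- combine
  have habs : 0 ≤ ∑ i, |x i - y i| := Finset.sum_nonneg fun i _ => abs_nonneg _
  have hcomb : (∑ i, |x i - y i|) * gKer d σ x y
      ≤ (Real.exp d * Real.exp (∑ i, |u i|)) * (gKer d σ x y₀
          * Real.exp ((1 / σ ^ 2) * ∑ i, |u i|)) :=
    mul_le_mul step1 step2 (gKer_pos hσ x y).le (by positivity)
  have hre : (Real.exp d * Real.exp (∑ i, |u i|)) * (gKer d σ x y₀
          * Real.exp ((1 / σ ^ 2) * ∑ i, |u i|))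
      = Real.exp d * (gKer d σ x y₀ * Real.exp (c₁ * ∑ i, |u i|)) := by
    rw [show c₁ * ∑ i, |u i| = (∑ i, |u i|) + (1 / σ ^ 2) * ∑ i, |u i| by rw [hc₁]; ring,
      Real.exp_add]
    ring
  unfold domB
  rw [mul_assoc]
  calc (∑ i, |x i - y i|) * gKer d σ x y
      ≤ Real.exp d * (gKer d σ x y₀ * Real.exp (c₁ * ∑ i, |u i|)) := by rw [← hre]; exact hcomb
    _ ≤ Real.exp d * (Real.exp (σ ^ 2 * ((d : ℝ) * c₁ ^ 2) / 2)
          * ∑ t : Finset (Fin d), gKer d σ x (zc d σ y₀ t)) :=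
        mul_le_mul_of_nonneg_left step4 (Real.exp_pos _).le
    _ = _ := by rw [hc₁]

lemma continuous_gKer_left (z : Fin d → ℝ) : Continuous fun x => gKer d σ x z := by
  unfold gKer sqDist
  fun_prop

lemma continuous_kdCLM (y : Fin d → ℝ) : Continuous fun x => kdCLM d σ x y := by
  unfold kdCLM
  apply Continuous.fun_smul
  · exact (continuous_gKer_left y).div_const _
  · exact continuous_finset_sum _ fun i _ => ((continuous_apply i).sub continuous_const).smul
      continuous_const

lemma norm_kdCLM_le (hσ : 0 < σ) (x y : Fin d → ℝ) :
    ‖kdCLM d σ x y‖ ≤ 1 / σ ^ 2 * ((∑ i, |x i - y i|) * gKer d σ x y) := by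
  unfold kdCLM
  refine (norm_smul_le (gKer d σ x y / σ ^ 2)
    (∑ i, (x i - y i) • (ContinuousLinearMap.proj i : (Fin d → ℝ) →L[ℝ] ℝ))).trans ?_
  have h1 : ‖∑ i, (x i - y i) • (ContinuousLinearMap.proj i : (Fin d → ℝ) →L[ℝ] ℝ)‖
      ≤ ∑ i, |x i - y i| := by
    refine (norm_sum_le _ _).trans (Finset.sum_le_sum fun i _ => ?_)
    refine (norm_smul_le (x i - y i)
      ((ContinuousLinearMap.proj i : (Fin d → ℝ) →L[ℝ] ℝ))).trans ?_
    have hp : ‖(ContinuousLinearMap.proj i : (Fin d → ℝ) →L[ℝ] ℝ)‖ ≤ 1 := by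
      apply ContinuousLinearMap.opNorm_le_bound _ zero_le_one
      intro v
      simpa using norm_le_pi_norm v i
    calc ‖x i - y i‖ * ‖(ContinuousLinearMap.proj i : (Fin d → ℝ) →L[ℝ] ℝ)‖
        ≤ ‖x i - y i‖ * 1 := by gcongr
      _ = |x i - y i| := by rw [mul_one]; rfl
  have h2 : ‖gKer d σ x y / σ ^ 2‖ = gKer d σ x y / σ ^ 2 := by
    rw [Real.norm_eq_abs, abs_of_pos (div_pos (gKer_pos hσ x y) (by positivity))]
  rw [h2]
  have hnn : 0 ≤ gKer d σ x y / σ ^ 2 := (div_pos (gKer_pos hσ x y) (by positivity)).le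
  calc gKer d σ x y / σ ^ 2 * ‖∑ i, (x i - y i) • (ContinuousLinearMap.proj i : (Fin d → ℝ) →L[ℝ] ℝ)‖
      ≤ gKer d σ x y / σ ^ 2 * ∑ i, |x i - y i| := mul_le_mul_of_nonneg_left h1 hnn
    _ = 1 / σ ^ 2 * ((∑ i, |x i - y i|) * gKer d σ x y) := by ring

/-- integrability of ψ·domB -/
lemma integrable_psi_domB (hσ : 0 < σ) {ψ : (Fin d → ℝ) → ℝ}
    (hint : ∀ z, Integrable fun x => ψ x * gKer d σ x z) (y₀ : Fin d → ℝ) :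
    Integrable fun x => |ψ x| * domB d σ y₀ x := by
  unfold domB
  have h : ∀ t : Finset (Fin d), Integrable fun x => |ψ x| * gKer d σ x (zc d σ y₀ t) := by
    intro t
    have := (hint (zc d σ y₀ t)).abs
    refine this.congr (Filter.Eventually.of_forall fun x => ?_)
    simp only [abs_mul, abs_of_pos (gKer_pos hσ x _)]
  have hsum : Integrable fun x => ∑ t : Finset (Fin d), |ψ x| * gKer d σ x (zc d σ y₀ t) :=
    integrable_finset_sum _ fun t _ => h t
  refine ((hsum.const_mul
      (Real.exp d * Real.exp (σ ^ 2 * ((d : ℝ) * (1 + 1 / σ ^ 2) ^ 2) / 2))).congr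
    (Filter.Eventually.of_forall fun x => ?_))
  simp only [Finset.mul_sum]
  exact Finset.sum_congr rfl fun t _ => by ring

open Metric in
lemma hasFDerivAt_intK (hσ : 0 < σ) {ψ : (Fin d → ℝ) → ℝ} (hc : Continuous ψ)
    (hint : ∀ z, Integrable fun x => ψ x * gKer d σ x z) (y₀ : Fin d → ℝ) :
    Integrable (fun x => ψ x • kdCLM d σ x y₀) ∧
    HasFDerivAt (fun y => ∫ x, ψ x * gKer d σ x y) (∫ x, ψ x • kdCLM d σ x y₀) y₀ := by
  have hbound_int : Integrable fun x => 1 / σ ^ 2 * (|ψ x| * domB d σ y₀ x) :=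
    (integrable_psi_domB hσ hint y₀).const_mul _
  have h_bound : ∀ᵐ x : Fin d → ℝ, ∀ y ∈ ball y₀ 1,
      ‖ψ x • kdCLM d σ x y‖ ≤ 1 / σ ^ 2 * (|ψ x| * domB d σ y₀ x) := by
    refine Filter.Eventually.of_forall fun x => fun y hy => ?_
    have hyc : ∀ i, |y i - y₀ i| ≤ 1 := by
      intro i
      have := dist_le_pi_dist y y₀ i
      rw [Real.dist_eq] at this
      exact this.trans (le_of_lt (mem_ball.1 hy))
    calc ‖ψ x • kdCLM d σ x y‖ = |ψ x| * ‖kdCLM d σ x y‖ := by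
          rw [norm_smul (ψ x) (kdCLM d σ x y), Real.norm_eq_abs]
      _ ≤ |ψ x| * (1 / σ ^ 2 * ((∑ i, |x i - y i|) * gKer d σ x y)) :=
          mul_le_mul_of_nonneg_left (norm_kdCLM_le hσ x y) (abs_nonneg _)
      _ ≤ |ψ x| * (1 / σ ^ 2 * domB d σ y₀ x) := by
          have := est hσ y₀ y x hyc
          have h2 : (0:ℝ) < σ ^ 2 := by positivity
          gcongr
      _ = 1 / σ ^ 2 * (|ψ x| * domB d σ y₀ x) := by ring
  have h_diff : ∀ᵐ x : Fin d → ℝ, ∀ y ∈ ball y₀ 1,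
      HasFDerivAt (fun y => ψ x * gKer d σ x y) (ψ x • kdCLM d σ x y) y :=
    Filter.Eventually.of_forall fun x y _ => (hasFDerivAt_gKer hσ x y).const_mul (ψ x)
  have hmeas : ∀ᶠ y in nhds y₀, AEStronglyMeasurable (fun x => ψ x * gKer d σ x y) volume :=
    Filter.Eventually.of_forall fun y => (hc.mul (continuous_gKer_left y)).aestronglyMeasurable
  have h'meas : AEStronglyMeasurable (fun x => ψ x • kdCLM d σ x y₀) volume :=
    (hc.smul (continuous_kdCLM y₀)).aestronglyMeasurable
  have key := hasFDerivAt_integral_of_dominated_of_fderiv_le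
    (F := fun y x => ψ x * gKer d σ x y) (F' := fun y x => ψ x • kdCLM d σ x y)
    (μ := volume) (bound := fun x => 1 / σ ^ 2 * (|ψ x| * domB d σ y₀ x))
    (ball_mem_nhds y₀ zero_lt_one) hmeas (hint y₀) h'meas h_bound hbound_int h_diff
  refine ⟨?_, key⟩
  refine hbound_int.mono' h'meas ?_
  exact h_bound.mono fun x hx => hx y₀ (mem_ball_self zero_lt_one)

lemma fderiv_intK_apply (hσ : 0 < σ) {ψ : (Fin d → ℝ) → ℝ} (hc : Continuous ψ)
    (hint : ∀ z, Integrable fun x => ψ x * gKer d σ x z) (y₀ : Fin d → ℝ) (j : Fin d) :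
    fderiv ℝ (fun y => ∫ x, ψ x * gKer d σ x y) y₀ (Pi.single j 1)
      = ∫ x, ψ x * ((x j - y₀ j) / σ ^ 2 * gKer d σ x y₀) := by
  obtain ⟨hi, hd⟩ := hasFDerivAt_intK hσ hc hint y₀
  rw [hd.fderiv]
  rw [ContinuousLinearMap.integral_apply hi]
  apply integral_congr_ae
  refine Filter.Eventually.of_forall fun x => ?_
  show (ψ x • kdCLM d σ x y₀) (Pi.single j 1) = _
  show (ψ x • kdCLM d σ x y₀) (Pi.single j 1) = ψ x * ((x j - y₀ j) / σ ^ 2 * gKer d σ x y₀)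
  rw [ContinuousLinearMap.smul_apply, kdCLM_apply_single, smul_eq_mul]

lemma hasFDerivAt_gKer_fst (hσ : 0 < σ) (z x : Fin d → ℝ) :
    HasFDerivAt (fun w => gKer d σ w z) (kdCLM d σ z x) x := by
  have e : (fun w => gKer d σ w z) = fun w => gKer d σ z w := funext fun w => gKer_comm w z
  rw [e]
  exact hasFDerivAt_gKer hσ z x

lemma fderiv_gKer_fst_single (hσ : 0 < σ) (z x : Fin d → ℝ) (i : Fin d) :
    fderiv ℝ (fun w => gKer d σ w z) x (Pi.single i 1)
      = -((x i - z i) / σ ^ 2 * gKer d σ x z) := by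
  rw [(hasFDerivAt_gKer_fst hσ z x).fderiv, kdCLM_apply_single, gKer_comm z x]
  ring

lemma integrable_mul_fac (hσ : 0 < σ) {ψ : (Fin d → ℝ) → ℝ} (hc : Continuous ψ)
    (hint : ∀ z, Integrable fun x => ψ x * gKer d σ x z) (z : Fin d → ℝ) (i : Fin d) :
    Integrable fun x => ψ x * ((x i - z i) / σ ^ 2 * gKer d σ x z) := by
  have hmeas : AEStronglyMeasurable (fun x => ψ x * ((x i - z i) / σ ^ 2 * gKer d σ x z)) volume := by
    apply Continuous.aestronglyMeasurable
    exact hc.mul ((((continuous_apply i).sub continuous_const).div_const _).mul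
      (continuous_gKer_left z))
  refine ((integrable_psi_domB hσ hint z).const_mul (1 / σ ^ 2)).mono' hmeas ?_
  refine Filter.Eventually.of_forall fun x => ?_
  have h2 : (0:ℝ) < σ ^ 2 := by positivity
  have hsingle : |x i - z i| ≤ ∑ i', |x i' - z i'| :=
    Finset.single_le_sum (f := fun i' => |x i' - z i'|) (fun i' _ => abs_nonneg _)
      (Finset.mem_univ i)
  have hest := est hσ z z x (fun i' => by simp)
  calc ‖ψ x * ((x i - z i) / σ ^ 2 * gKer d σ x z)‖
      = |ψ x| * (|x i - z i| * gKer d σ x z) / σ ^ 2 := by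
        rw [Real.norm_eq_abs, abs_mul, abs_mul, abs_div,
          abs_of_pos (gKer_pos hσ x z), abs_of_pos h2]
        ring
    _ ≤ |ψ x| * ((∑ i', |x i' - z i'|) * gKer d σ x z) / σ ^ 2 := by
        gcongr
        exact (gKer_pos hσ x z).le
    _ ≤ |ψ x| * domB d σ z x / σ ^ 2 := by gcongr
    _ = 1 / σ ^ 2 * (|ψ x| * domB d σ z x) := by ring

/-- Integration by parts against the Gaussian kernel. -/
lemma ibp (hσ : 0 < σ) {F : (Fin d → ℝ) → ℝ} (hF : Differentiable ℝ F) (z : Fin d → ℝ) (i : Fin d)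
    (h1 : Integrable fun x => fderiv ℝ F x (Pi.single i 1) * gKer d σ x z)
    (h2 : Integrable fun x => F x * gKer d σ x z)
    (h3 : Integrable fun x => F x * ((x i - z i) / σ ^ 2 * gKer d σ x z)) :
    ∫ x, F x * ((x i - z i) / σ ^ 2 * gKer d σ x z)
      = ∫ x, fderiv ℝ F x (Pi.single i 1) * gKer d σ x z := by
  have hg : Differentiable ℝ (fun w => gKer d σ w z) :=
    fun x => (hasFDerivAt_gKer_fst hσ z x).differentiableAt
  have hfg' : Integrable (fun x => F x * fderiv ℝ (fun w => gKer d σ w z) x (Pi.single i 1)) := by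
    refine h3.neg.congr (Filter.Eventually.of_forall fun x => ?_)
    show -(F x * ((x i - z i) / σ ^ 2 * gKer d σ x z))
      = F x * fderiv ℝ (fun w => gKer d σ w z) x (Pi.single i 1)
    rw [fderiv_gKer_fst_single hσ z x i]
    ring
  have key := integral_mul_fderiv_eq_neg_fderiv_mul_of_integrable
    (f := F) (g := fun w => gKer d σ w z) (v := Pi.single i 1) (μ := volume) h1 hfg' h2 (fun x _ => hF x) (fun x _ => hg x)
  have e1 : ∫ x, F x * fderiv ℝ (fun w => gKer d σ w z) x (Pi.single i 1)
      = -∫ x, F x * ((x i - z i) / σ ^ 2 * gKer d σ x z) := by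
    rw [← integral_neg]
    apply integral_congr_ae
    refine Filter.Eventually.of_forall fun x => ?_
    show F x * fderiv ℝ (fun w => gKer d σ w z) x (Pi.single i 1)
      = -(F x * ((x i - z i) / σ ^ 2 * gKer d σ x z))
    rw [fderiv_gKer_fst_single hσ z x i]
    ring
  rw [e1] at key
  linarith [key]

variable {f : (Fin d → ℝ) → ℝ}

lemma diff_f (hf : ContDiff ℝ 2 f) : Differentiable ℝ f :=
  hf.differentiable two_ne_zero

lemma contdiff_fderiv (hf : ContDiff ℝ 2 f) : ContDiff ℝ 1 (fderiv ℝ f) :=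
  hf.fderiv_right (by norm_num)

lemma continuous_grad (hf : ContDiff ℝ 2 f) (j : Fin d) :
    Continuous fun x => grad' f x j :=
  (ContinuousLinearMap.apply ℝ ℝ (Pi.single j 1)).continuous.comp
    ((contdiff_fderiv hf).continuous)

lemma hasFDerivAt_expf (hf : ContDiff ℝ 2 f) (x : Fin d → ℝ) :
    HasFDerivAt (fun x => Real.exp (-f x)) (Real.exp (-f x) • (-fderiv ℝ f x)) x :=
  ((diff_f hf x).hasFDerivAt.neg).exp

lemma continuous_expf (hf : ContDiff ℝ 2 f) : Continuous fun x => Real.exp (-f x) :=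
  Real.continuous_exp.comp (hf.continuous.neg)

lemma hasFDerivAt_gradj (hf : ContDiff ℝ 2 f) (j : Fin d) (x : Fin d → ℝ) :
    HasFDerivAt (fun z => fderiv ℝ f z (Pi.single j 1))
      ((ContinuousLinearMap.apply ℝ ℝ (Pi.single j 1)).comp (fderiv ℝ (fderiv ℝ f) x)) x := by
  show HasFDerivAt (⇑(ContinuousLinearMap.apply ℝ ℝ (Pi.single j 1)) ∘ (fderiv ℝ f)) _ x
  exact (ContinuousLinearMap.apply ℝ ℝ (Pi.single j 1)).hasFDerivAt.comp x
    ((contdiff_fderiv hf).differentiable one_ne_zero x).hasFDerivAt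

lemma hess'_eq (hf : ContDiff ℝ 2 f) (x : Fin d → ℝ) (i j : Fin d) :
    hess' f x i j
      = (ContinuousLinearMap.apply ℝ ℝ (Pi.single j 1)).comp (fderiv ℝ (fderiv ℝ f) x)
          (Pi.single i 1) := by
  show fderiv ℝ (fun z => fderiv ℝ f z (Pi.single j 1)) x (Pi.single i 1) = _
  rw [(hasFDerivAt_gradj hf j x).fderiv]

/-- derivative of `grad_j f · exp (-f)` in direction `e_i`. -/
lemma hasFDerivAt_psi2 (hf : ContDiff ℝ 2 f) (j : Fin d) (x : Fin d → ℝ) :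
    HasFDerivAt (fun x => grad' f x j * Real.exp (-f x))
      ((grad' f x j) • (Real.exp (-f x) • (-fderiv ℝ f x))
        + (Real.exp (-f x)) •
            ((ContinuousLinearMap.apply ℝ ℝ (Pi.single j 1)).comp (fderiv ℝ (fderiv ℝ f) x))) x :=
  HasFDerivAt.mul (hasFDerivAt_gradj hf j x) (hasFDerivAt_expf hf x)

lemma fderiv_psi2_single (hf : ContDiff ℝ 2 f) (j i : Fin d) (x : Fin d → ℝ) :
    fderiv ℝ (fun x => grad' f x j * Real.exp (-f x)) x (Pi.single i 1)
      = hess' f x i j * Real.exp (-f x)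
        - grad' f x i * grad' f x j * Real.exp (-f x) := by
  rw [(hasFDerivAt_psi2 hf j x).fderiv]
  rw [hess'_eq hf x i j]
  simp only [ContinuousLinearMap.add_apply, ContinuousLinearMap.smul_apply,
    ContinuousLinearMap.neg_apply, ContinuousLinearMap.coe_comp', Function.comp_apply,
    ContinuousLinearMap.apply_apply, smul_eq_mul]
  show grad' f x j * (Real.exp (-f x) * -(grad' f x i)) + _ = _
  ring

end AuxLemmas

/-- If `X ~ e^{−f}/Z` with `f` C² and `Y = X + N`, `N ~ N(0, σ²I)`, then
`∇² log p_Y(y) = −𝔼[∇²f(X) | Y=y] + cov(∇f(X) | Y=y)`. -/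
theorem stmt4 (d : ℕ) (σ : ℝ) (hσ : 0 < σ) (f : (Fin d → ℝ) → ℝ)
    (hf : ContDiff ℝ 2 f) (hfi : Integrable fun x => Real.exp (-f x))
    (hint1 : ∀ y i, Integrable fun x => grad' f x i * (Real.exp (-f x) * gKer d σ x y))
    (hint2 : ∀ y i j,
      Integrable fun x => grad' f x i * grad' f x j * (Real.exp (-f x) * gKer d σ x y))
    (hint3 : ∀ y i j,
      Integrable fun x => hess' f x i j * (Real.exp (-f x) * gKer d σ x y)) :
    ∀ y : Fin d → ℝ,
      hess' (fun z => Real.log (∫ x, Real.exp (-f x) * gKer d σ x z)) y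
        = Matrix.of (fun i j => -postE d σ f (fun x => hess' f x i j) y
            + (postE d σ f (fun x => grad' f x i * grad' f x j) y
               - postE d σ f (fun x => grad' f x i) y
                  * postE d σ f (fun x => grad' f x j) y)) := by
  intro y
  have hdf : Differentiable ℝ f := hf.differentiable two_ne_zero
  have hcexp := continuous_expf hf
  -- integrability of exp(-f) * gKer
  have hψ1 : ∀ z, Integrable fun x => Real.exp (-f x) * gKer d σ x z := by
    intro z
    refine (hfi.const_mul ((2 * π * σ ^ 2) ^ (-(d : ℝ) / 2))).mono'
      ((hcexp.mul (continuous_gKer_left z)).aestronglyMeasurable) ?_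
    refine Filter.Eventually.of_forall fun x => ?_
    rw [Real.norm_eq_abs, abs_mul, abs_of_pos (Real.exp_pos _), abs_of_pos (gKer_pos hσ x z)]
    calc Real.exp (-f x) * gKer d σ x z
        ≤ Real.exp (-f x) * (2 * π * σ ^ 2) ^ (-(d : ℝ) / 2) :=
          mul_le_mul_of_nonneg_left (gKer_le hσ x z) (Real.exp_pos _).le
      _ = (2 * π * σ ^ 2) ^ (-(d : ℝ) / 2) * Real.exp (-f x) := mul_comm _ _
  -- integrability of ψ₂ j * gKer
  have hψ2 : ∀ j z, Integrable fun x => (grad' f x j * Real.exp (-f x)) * gKer d σ x z := by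
    intro j z
    exact (hint1 z j).congr (Filter.Eventually.of_forall fun x => (mul_assoc _ _ _).symm)
  have hcψ2 : ∀ j : Fin d, Continuous fun x => grad' f x j * Real.exp (-f x) :=
    fun j => (continuous_grad hf j).mul hcexp
  -- positivity of the normalizing integral
  have hIpos : ∀ z, 0 < ∫ x, Real.exp (-f x) * gKer d σ x z := by
    intro z
    rw [integral_pos_iff_support_of_nonneg
      (fun x => le_of_lt (mul_pos (Real.exp_pos _) (gKer_pos hσ x z))) (hψ1 z)]
    have hs : Function.support (fun x => Real.exp (-f x) * gKer d σ x z) = Set.univ :=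
      Set.eq_univ_iff_forall.2 fun x => (mul_pos (Real.exp_pos _) (gKer_pos hσ x z)).ne'
    rw [hs]
    exact isOpen_univ.measure_pos volume ⟨fun _ => 0, trivial⟩
  -- first derivative : ∀ z j, fderiv of I at z in dir e_j = - Nj
  have hD1 : ∀ (z : Fin d → ℝ) (j : Fin d),
      fderiv ℝ (fun w => ∫ x, Real.exp (-f x) * gKer d σ x w) z (Pi.single j 1)
        = -∫ x, grad' f x j * (Real.exp (-f x) * gKer d σ x z) := by
    intro z j
    rw [fderiv_intK_apply hσ hcexp hψ1 z j]
    have hfd : ∀ x : Fin d → ℝ, fderiv ℝ (fun x => Real.exp (-f x)) x (Pi.single j 1)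
        = -(grad' f x j * Real.exp (-f x)) := by
      intro x
      rw [(hasFDerivAt_expf hf x).fderiv]
      show Real.exp (-f x) * (-(fderiv ℝ f x) (Pi.single j 1)) = _
      show Real.exp (-f x) * (-(fderiv ℝ f x (Pi.single j 1))) = _
      rw [show fderiv ℝ f x (Pi.single j 1) = grad' f x j from rfl]
      ring
    have h1 : Integrable fun x =>
        fderiv ℝ (fun x => Real.exp (-f x)) x (Pi.single j 1) * gKer d σ x z := by
      refine ((hψ2 j z).neg).congr (Filter.Eventually.of_forall fun x => ?_)
      show -((grad' f x j * Real.exp (-f x)) * gKer d σ x z)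
        = fderiv ℝ (fun x => Real.exp (-f x)) x (Pi.single j 1) * gKer d σ x z
      rw [hfd x]; ring
    have key := ibp hσ (fun x => ((hasFDerivAt_expf hf x).differentiableAt)) z j
      h1 (hψ1 z) (integrable_mul_fac hσ hcexp hψ1 z j)
    rw [key]
    rw [← integral_neg]
    apply integral_congr_ae
    refine Filter.Eventually.of_forall fun x => ?_
    show fderiv ℝ (fun x => Real.exp (-f x)) x (Pi.single j 1) * gKer d σ x z
      = -(grad' f x j * (Real.exp (-f x) * gKer d σ x z))
    rw [hfd x]; ring
  -- second derivative of the numerator Nfun j := ∫ ψ₂ j * gKer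
  have hD2 : ∀ (j i : Fin d) (z : Fin d → ℝ),
      fderiv ℝ (fun w => ∫ x, (grad' f x j * Real.exp (-f x)) * gKer d σ x w) z (Pi.single i 1)
        = (∫ x, hess' f x i j * (Real.exp (-f x) * gKer d σ x z))
          - ∫ x, grad' f x i * grad' f x j * (Real.exp (-f x) * gKer d σ x z) := by
    intro j i z
    rw [fderiv_intK_apply hσ (hcψ2 j) (hψ2 j) z i]
    have h1 : Integrable fun x =>
        fderiv ℝ (fun x => grad' f x j * Real.exp (-f x)) x (Pi.single i 1) * gKer d σ x z := by
      refine (((hint3 z i j).sub (hint2 z i j))).congr (Filter.Eventually.of_forall fun x => ?_)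
      show hess' f x i j * (Real.exp (-f x) * gKer d σ x z)
          - grad' f x i * grad' f x j * (Real.exp (-f x) * gKer d σ x z)
        = fderiv ℝ (fun x => grad' f x j * Real.exp (-f x)) x (Pi.single i 1) * gKer d σ x z
      rw [fderiv_psi2_single hf j i x]; ring
    have key := ibp hσ (fun x => (hasFDerivAt_psi2 hf j x).differentiableAt) z i
      h1 (hψ2 j z) (integrable_mul_fac hσ (hcψ2 j) (hψ2 j) z i)
    rw [key, ← integral_sub (hint3 z i j) (hint2 z i j)]
    apply integral_congr_ae
    refine Filter.Eventually.of_forall fun x => ?_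
    show fderiv ℝ (fun x => grad' f x j * Real.exp (-f x)) x (Pi.single i 1) * gKer d σ x z
      = hess' f x i j * (Real.exp (-f x) * gKer d σ x z)
        - grad' f x i * grad' f x j * (Real.exp (-f x) * gKer d σ x z)
    rw [fderiv_psi2_single hf j i x]; ring
  -- the gradient of log I equals -Nfun j / I
  have hlogf : ∀ j : Fin d, (fun z => fderiv ℝ
        (fun w => Real.log (∫ x, Real.exp (-f x) * gKer d σ x w)) z (Pi.single j 1))
      = fun z => -((∫ x, (grad' f x j * Real.exp (-f x)) * gKer d σ x z)
          / (∫ x, Real.exp (-f x) * gKer d σ x z)) := by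
    intro j
    funext z
    have hIz := (hasFDerivAt_intK hσ hcexp hψ1 z).2
    have hlz := hIz.log (hIpos z).ne'
    rw [hlz.fderiv]
    show (∫ x, Real.exp (-f x) * gKer d σ x z)⁻¹
        * ((∫ x, Real.exp (-f x) • kdCLM d σ x z) (Pi.single j 1)) = _
    rw [← hIz.fderiv, hD1 z j]
    have : (∫ x, (grad' f x j * Real.exp (-f x)) * gKer d σ x z)
        = ∫ x, grad' f x j * (Real.exp (-f x) * gKer d σ x z) :=
      integral_congr_ae (Filter.Eventually.of_forall fun x => mul_assoc _ _ _)
    rw [this]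
    field_simp
  -- final assembly
  funext i j
  show fderiv ℝ (fun z => fderiv ℝ
      (fun w => Real.log (∫ x, Real.exp (-f x) * gKer d σ x w)) z (Pi.single j 1)) y
        (Pi.single i 1) = _
  rw [hlogf j]
  -- derivative of the quotient
  have hN := (hasFDerivAt_intK hσ (hcψ2 j) (hψ2 j) y).2
  have hI := (hasFDerivAt_intK hσ hcexp hψ1 y).2
  have hInv := (hasDerivAt_inv (hIpos y).ne').comp_hasFDerivAt y hI
  have hq := (hN.mul hInv).neg
  have hqf : (fun z => -((∫ x, (grad' f x j * Real.exp (-f x)) * gKer d σ x z)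
        / (∫ x, Real.exp (-f x) * gKer d σ x z)))
      = fun z => -((∫ x, (grad' f x j * Real.exp (-f x)) * gKer d σ x z)
        * (∫ x, Real.exp (-f x) * gKer d σ x z)⁻¹) :=
    funext fun z => by rw [div_eq_mul_inv]
  have hq' : HasFDerivAt
      (fun z => -((∫ x, (grad' f x j * Real.exp (-f x)) * gKer d σ x z)
        * (∫ x, Real.exp (-f x) * gKer d σ x z)⁻¹))
      (-(((∫ x, (grad' f x j * Real.exp (-f x)) * gKer d σ x y)
          • ((-((∫ x, Real.exp (-f x) * gKer d σ x y) ^ 2)⁻¹)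
              • ∫ x, Real.exp (-f x) • kdCLM d σ x y))
        + (∫ x, Real.exp (-f x) * gKer d σ x y)⁻¹
            • ∫ x, (grad' f x j * Real.exp (-f x)) • kdCLM d σ x y)) y := hq
  rw [hqf, hq'.fderiv]
  simp only [ContinuousLinearMap.neg_apply, ContinuousLinearMap.add_apply,
    ContinuousLinearMap.smul_apply, smul_eq_mul]
  rw [← hN.fderiv, ← hI.fderiv, hD2 j i y, hD1 y i]
  -- now pure algebra
  have hNum : (∫ x, (grad' f x j * Real.exp (-f x)) * gKer d σ x y)
      = ∫ x, grad' f x j * (Real.exp (-f x) * gKer d σ x y) :=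
    integral_congr_ae (Filter.Eventually.of_forall fun x => mul_assoc _ _ _)
  rw [hNum]
  show _ = -postE d σ f (fun x => hess' f x i j) y
      + (postE d σ f (fun x => grad' f x i * grad' f x j) y
        - postE d σ f (fun x => grad' f x i) y * postE d σ f (fun x => grad' f x j) y)
  unfold postE
  have hIy := (hIpos y).ne'
  field_simp
  ring

end
end
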